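/- Let p = (p_m)_{m≥1} be a consistent classical source on the alphabet Fin d, let (e_1,…,e_d) be the standard orthonormal basis of ℂ^d, and let D_m := ∑_{x : Fin m → Fin d} p_m(x)·(e_{x(1)}e_{x(1)}† ⊗ ⋯ ⊗ e_{x(m)}e_{x(m)}†) be the associated diagonal density matrices. Then (D_m)_{m≥1} is a stationary quantum source if and only if p is stationary, and (D_m)_{m≥1} is an ergodic quantum source if and only if p is ergodic. -/

import Mathlib

open Matrix Finset Filter Topology
open scoped ComplexOrder

noncomputable section

/-- `Mat d m` is the algebra of operators on the `m`-fold tensor power of `ℂ^d`,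
realized as matrices indexed by words `Fin m → Fin d`. -/
abbrev Mat (d m : ℕ) : Type := Matrix (Fin m → Fin d) (Fin m → Fin d) ℂ

/-- Kronecker (tensor) product `A ⊗ B` of `A : Mat d m` and `B : Mat d i`. -/
def tens {d m i : ℕ} (A : Mat d m) (B : Mat d i) : Mat d (m + i) :=
  Matrix.of fun x y =>
    A (fun k => x (Fin.castAdd i k)) (fun k => y (Fin.castAdd i k)) *
    B (fun k => x (Fin.natAdd m k)) (fun k => y (Fin.natAdd m k))

/-- A quantum source: each `ρ m` (for `m ≥ 1`) is positive semidefinite with trace 1. -/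
def IsQSource (d : ℕ) (ρ : ∀ m, Mat d m) : Prop :=
  ∀ m, 1 ≤ m → (ρ m).PosSemidef ∧ (ρ m).trace = 1

/-- Consistency: `tr(ρ_m a) = tr(ρ_{m+i} (a ⊗ I^{⊗i}))`. -/
def QConsistent (d : ℕ) (ρ : ∀ m, Mat d m) : Prop :=
  ∀ m i, 1 ≤ m → 1 ≤ i → ∀ a : Mat d m,
    (ρ m * a).trace = (ρ (m + i) * tens a (1 : Mat d i)).trace

/-- Stationarity: `tr(ρ_m a) = tr(ρ_{i+m} (I^{⊗i} ⊗ a))`. -/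
def QStationary (d : ℕ) (ρ : ∀ m, Mat d m) : Prop :=
  ∀ m i, 1 ≤ m → 1 ≤ i → ∀ a : Mat d m,
    (ρ m * a).trace = (ρ (i + m) * tens (1 : Mat d i) a).trace

/-- Ergodicity: Cesàro averages of `tr(ρ_{m+i} (a ⊗ I^{⊗(i-m)} ⊗ b))` converge to
`tr(ρ_m a)·tr(ρ_m b)`. -/
def QErgodic (d : ℕ) (ρ : ∀ m, Mat d m) : Prop :=
  ∀ m, 1 ≤ m → ∀ a b : Mat d m,
    Tendsto (fun n : ℕ =>
        (n : ℂ)⁻¹ * ∑ i ∈ Finset.Icc m n,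
          (ρ (m + (i - m) + m) * tens (tens a (1 : Mat d (i - m))) b).trace)
      atTop (nhds ((ρ m * a).trace * (ρ m * b).trace))

/-- Weak mixing. -/
def QWeakMixing (d : ℕ) (ρ : ∀ m, Mat d m) : Prop :=
  ∀ m, 1 ≤ m → ∀ a b : Mat d m,
    Tendsto (fun n : ℕ =>
        (n : ℝ)⁻¹ * ∑ i ∈ Finset.Icc m n,
          ‖((ρ (m + (i - m) + m) * tens (tens a (1 : Mat d (i - m))) b).trace
            - (ρ m * a).trace * (ρ m * b).trace)‖)
      atTop (nhds 0)

/-- Strong mixing. -/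
def QStrongMixing (d : ℕ) (ρ : ∀ m, Mat d m) : Prop :=
  ∀ m, 1 ≤ m → ∀ a b : Mat d m,
    Tendsto (fun i : ℕ =>
        (ρ (m + (i - m) + m) * tens (tens a (1 : Mat d (i - m))) b).trace)
      atTop (nhds ((ρ m * a).trace * (ρ m * b).trace))

/-- The `m`-fold elementary tensor `A_{j 1} ⊗ ⋯ ⊗ A_{j m}` of Kraus operators. -/
def krausPow {d : ℕ} {J : Type} [Fintype J] (A : J → Matrix (Fin d) (Fin d) ℂ)
    {m : ℕ} (j : Fin m → J) : Mat d m :=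
  Matrix.of fun x y => ∏ k, A (j k) (x k) (y k)

/-- The induced map `E^{⊗m}` of a memoryless channel with Kraus operators `A`. -/
def channelPow {d : ℕ} {J : Type} [Fintype J] (A : J → Matrix (Fin d) (Fin d) ℂ)
    (m : ℕ) (σ : Mat d m) : Mat d m :=
  ∑ j : Fin m → J, krausPow A j * σ * (krausPow A j)ᴴ

/-- A classical source on alphabet `Fin d`: each `p m` (for `m ≥ 1`) is a
probability distribution on words of length `m`. -/
def IsCSource (d : ℕ) (p : ∀ m, (Fin m → Fin d) → ℝ) : Prop :=
  ∀ m, 1 ≤ m → (∀ x, 0 ≤ p m x) ∧ ∑ x, p m x = 1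

def CConsistent (d : ℕ) (p : ∀ m, (Fin m → Fin d) → ℝ) : Prop :=
  ∀ m i, 1 ≤ m → 1 ≤ i → ∀ x : Fin m → Fin d,
    p m x = ∑ y : Fin i → Fin d, p (m + i) (Fin.append x y)

def CStationary (d : ℕ) (p : ∀ m, (Fin m → Fin d) → ℝ) : Prop :=
  ∀ m i, 1 ≤ m → 1 ≤ i → ∀ x : Fin m → Fin d,
    p m x = ∑ y : Fin i → Fin d, p (i + m) (Fin.append y x)

def CErgodic (d : ℕ) (p : ∀ m, (Fin m → Fin d) → ℝ) : Prop :=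
  ∀ m, 1 ≤ m → ∀ x y : Fin m → Fin d,
    Tendsto (fun n : ℕ =>
        (n : ℝ)⁻¹ * ∑ i ∈ Finset.Icc m n,
          ∑ z : Fin (i - m) → Fin d, p (m + (i - m) + m) (Fin.append (Fin.append x z) y))
      atTop (nhds (p m x * p m y))

def CWeakMixing (d : ℕ) (p : ∀ m, (Fin m → Fin d) → ℝ) : Prop :=
  ∀ m, 1 ≤ m → ∀ x y : Fin m → Fin d,
    Tendsto (fun n : ℕ =>
        (n : ℝ)⁻¹ * ∑ i ∈ Finset.Icc m n,
          |(∑ z : Fin (i - m) → Fin d, p (m + (i - m) + m) (Fin.append (Fin.append x z) y))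
            - p m x * p m y|)
      atTop (nhds 0)

def CStrongMixing (d : ℕ) (p : ∀ m, (Fin m → Fin d) → ℝ) : Prop :=
  ∀ m, 1 ≤ m → ∀ x y : Fin m → Fin d,
    Tendsto (fun i : ℕ =>
        ∑ z : Fin (i - m) → Fin d, p (m + (i - m) + m) (Fin.append (Fin.append x z) y))
      atTop (nhds (p m x * p m y))

/-- The classically correlated state `∑_x p(x) · ψ_{x 1}ψ_{x 1}† ⊗ ⋯ ⊗ ψ_{x m}ψ_{x m}†`. -/
def clsState {d : ℕ} (ψ : Fin d → Fin d → ℂ) {m : ℕ} (pm : (Fin m → Fin d) → ℝ) : Mat d m :=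
  ∑ x : Fin m → Fin d, (pm x : ℂ) •
    Matrix.of (fun u v => ∏ k, ψ (x k) (u k) * star (ψ (x k) (v k)))

/-- The probability `⟨u_{x 1} ⊗ ⋯ ⊗ u_{x m}, ρ (u_{x 1} ⊗ ⋯ ⊗ u_{x m})⟩` of
measurement outcome `x` in the product basis built from `u`. -/
def measProb {d m : ℕ} (ρ : Mat d m) (u : Fin d → Fin d → ℂ) (x : Fin m → Fin d) : ℝ :=
  (∑ v : Fin m → Fin d, ∑ w : Fin m → Fin d,
    star (∏ k, u (x k) (v k)) * ρ v w * ∏ k, u (x k) (w k)).re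

/-- Von Neumann entropy (base-2) of a Hermitian matrix, via its eigenvalues;
junk value `0` for non-Hermitian input.  The convention `0·log₂ 0 = 0` holds
automatically since `Real.logb 2 0 = 0`. -/
def vnEntropy {n : Type} [Fintype n] [DecidableEq n] (ρ : Matrix n n ℂ) : ℝ :=
  if h : ρ.IsHermitian then -∑ k, h.eigenvalues k * Real.logb 2 (h.eigenvalues k) else 0


/-! ### Auxiliary lemmas -/

def appendEquiv (d m i : ℕ) : ((Fin m → Fin d) × (Fin i → Fin d)) ≃ (Fin (m+i) → Fin d) where
  toFun uv := Fin.append uv.1 uv.2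
  invFun w := (fun k => w (Fin.castAdd i k), fun k => w (Fin.natAdd m k))
  left_inv := by
    rintro ⟨u, v⟩
    refine Prod.ext ?_ ?_ <;> funext k <;> simp [Fin.append_left, Fin.append_right]
  right_inv := by
    intro w; funext x
    induction x using Fin.addCases with
    | left k => simp [Fin.append_left]
    | right k => simp [Fin.append_right]

theorem sum_append {M : Type} [AddCommMonoid M] {d m i : ℕ} (f : (Fin (m+i) → Fin d) → M) :
    ∑ w, f w = ∑ u : Fin m → Fin d, ∑ v : Fin i → Fin d, f (Fin.append u v) := by
  rw [← Equiv.sum_comp (appendEquiv d m i) f, Fintype.sum_prod_type]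
  rfl

theorem clsState_delta {d m : ℕ} (pm : (Fin m → Fin d) → ℝ) :
    clsState (fun i k => if k = i then (1 : ℂ) else 0) pm
      = Matrix.diagonal (fun x => (pm x : ℂ)) := by
  ext u v
  simp only [clsState, Matrix.sum_apply, Matrix.smul_apply, Matrix.of_apply, smul_eq_mul]
  have key : ∀ x : Fin m → Fin d,
      (pm x : ℂ) * ∏ k, ((if u k = x k then (1:ℂ) else 0) * star (if v k = x k then (1:ℂ) else 0))
      = if x = u ∧ u = v then (pm x : ℂ) else 0 := by
    intro x
    have : ∀ k : Fin m, ((if u k = x k then (1:ℂ) else 0) * star (if v k = x k then (1:ℂ) else 0))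
        = if u k = x k ∧ v k = x k then 1 else 0 := by
      intro k
      by_cases h1 : u k = x k <;> by_cases h2 : v k = x k <;> simp [h1, h2]
    rw [Finset.prod_congr rfl fun k _ => this k, Finset.prod_boole]
    by_cases h : x = u ∧ u = v
    · obtain ⟨rfl, rfl⟩ := h; simp
    · rw [if_neg h, if_neg, mul_zero]
      intro hall
      exact h ⟨(funext fun k => (hall k (Finset.mem_univ k)).1).symm,
        funext fun k => ((hall k (Finset.mem_univ k)).1).trans ((hall k (Finset.mem_univ k)).2).symm⟩
  rw [Finset.sum_congr rfl fun x _ => key x]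
  by_cases h : u = v
  · subst h; simp [Matrix.diagonal_apply_eq]
  · simp [Matrix.diagonal_apply_ne _ h, h]

theorem trace_diag_mul {n : Type} [Fintype n] [DecidableEq n] (f : n → ℂ) (a : Matrix n n ℂ) :
    (Matrix.diagonal f * a).trace = ∑ x, f x * a x x := by
  simp [Matrix.trace, Matrix.mul_apply, Matrix.diagonal]

theorem tens_append_diag {d m i : ℕ} (A : Mat d m) (B : Mat d i)
    (u : Fin m → Fin d) (v : Fin i → Fin d) :
    tens A B (Fin.append u v) (Fin.append u v) = A u u * B v v := by
  simp [tens, Fin.append_left, Fin.append_right]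

/-- Trace of `D_{i+m} * (1 ⊗ a)` for the diagonal state. -/
theorem trace_diag_one_tens {d m i : ℕ} (q : (Fin (i+m) → Fin d) → ℝ) (a : Mat d m) :
    (Matrix.diagonal (fun w => (q w : ℂ)) * tens (1 : Mat d i) a).trace
      = ∑ x : Fin m → Fin d, (((∑ y : Fin i → Fin d, q (Fin.append y x)) : ℝ) : ℂ) * a x x := by
  rw [trace_diag_mul, sum_append (fun w => (q w : ℂ) * tens (1 : Mat d i) a w w),
    Finset.sum_comm]
  refine Finset.sum_congr rfl fun x _ => ?_
  push_cast
  rw [Finset.sum_mul]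
  refine Finset.sum_congr rfl fun y _ => ?_
  rw [tens_append_diag, Matrix.one_apply_eq, one_mul]

/-- Trace of `D_{m+j+m} * ((a ⊗ 1) ⊗ b)` for the diagonal state. -/
theorem trace_diag_tens3 {d m j : ℕ} (q : (Fin (m+j+m) → Fin d) → ℝ) (a b : Mat d m) :
    (Matrix.diagonal (fun w => (q w : ℂ)) * tens (tens a (1 : Mat d j)) b).trace
      = ∑ x : Fin m → Fin d, ∑ y : Fin m → Fin d,
          (((∑ z : Fin j → Fin d, q (Fin.append (Fin.append x z) y)) : ℝ) : ℂ)
            * (a x x * b y y) := by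
  rw [trace_diag_mul]
  rw [sum_append (fun w => (q w : ℂ) * tens (tens a (1 : Mat d j)) b w w)]
  rw [sum_append (fun u => ∑ y : Fin m → Fin d, (q (Fin.append u y) : ℂ) *
    tens (tens a (1 : Mat d j)) b (Fin.append u y) (Fin.append u y))]
  refine Finset.sum_congr rfl fun x _ => ?_
  rw [Finset.sum_comm]
  refine Finset.sum_congr rfl fun y _ => ?_
  push_cast
  rw [Finset.sum_mul]
  refine Finset.sum_congr rfl fun z _ => ?_
  rw [tens_append_diag, tens_append_diag, Matrix.one_apply_eq, mul_one]

theorem sum_ite_ite {n : Type} [Fintype n] [DecidableEq n] (c : n → n → ℂ) (x y : n) :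
    ∑ u, ∑ v, c u v * ((if u = x then (1:ℂ) else 0) * (if v = y then (1:ℂ) else 0)) = c x y := by
  simp [mul_ite, mul_one, mul_zero, ite_mul, zero_mul, Finset.sum_ite_eq']

theorem sum_ite_single {n : Type} [Fintype n] [DecidableEq n] (c : n → ℂ) (x : n) :
    ∑ u, c u * (if u = x then (1:ℂ) else 0) = c x := by
  simp [mul_ite, mul_one, mul_zero, Finset.sum_ite_eq']

/-- for the diagonal density matrices built from a consistent
classical source `p` on the standard basis, stationarity (resp. ergodicity) of
the quantum family is equivalent to stationarity (resp. ergodicity) of `p`. -/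
theorem diagonal_source_stationary_ergodic_iff
    (d : ℕ) (hd : 2 ≤ d)
    (p : ∀ m, (Fin m → Fin d) → ℝ) (hp : IsCSource d p) (hc : CConsistent d p) :
    ((IsQSource d (fun m => clsState (fun i k => if k = i then (1 : ℂ) else 0) (p m)) ∧
        QStationary d (fun m => clsState (fun i k => if k = i then (1 : ℂ) else 0) (p m)))
      ↔ CStationary d p) ∧
    ((IsQSource d (fun m => clsState (fun i k => if k = i then (1 : ℂ) else 0) (p m)) ∧
        QErgodic d (fun m => clsState (fun i k => if k = i then (1 : ℂ) else 0) (p m)))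
      ↔ CErgodic d p) := by
  have hQ : IsQSource d (fun m => clsState (fun i k => if k = i then (1 : ℂ) else 0) (p m)) := by
    intro m hm
    simp only [clsState_delta]
    constructor
    · refine Matrix.posSemidef_diagonal_iff.mpr fun x => ?_
      exact_mod_cast (hp m hm).1 x
    · rw [Matrix.trace_diagonal]
      exact_mod_cast (hp m hm).2
  constructor
  · constructor
    · rintro ⟨-, hq⟩ m i hm hi x
      have h := hq m i hm hi (Matrix.diagonal (fun w => if w = x then (1:ℂ) else 0))
      simp only [clsState_delta] at h
      rw [trace_diag_one_tens, trace_diag_mul] at h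
      simp only [Matrix.diagonal_apply_eq, sum_ite_single] at h
      exact_mod_cast h
    · intro hs
      refine ⟨hQ, ?_⟩
      intro m i hm hi a
      simp only [clsState_delta]
      rw [trace_diag_one_tens, trace_diag_mul]
      refine Finset.sum_congr rfl fun x _ => ?_
      rw [hs m i hm hi x]
  · constructor
    · rintro ⟨-, hq⟩ m hm x y
      have h := hq m hm (Matrix.diagonal (fun w => if w = x then (1:ℂ) else 0))
        (Matrix.diagonal (fun w => if w = y then (1:ℂ) else 0))
      simp only [clsState_delta] at h
      simp only [trace_diag_tens3] at h
      simp only [trace_diag_mul] at h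
      simp only [Matrix.diagonal_apply_eq, sum_ite_ite, sum_ite_single] at h
      have h2 := (Complex.continuous_re.tendsto _).comp h
      have key : ∀ n : ℕ,
          (Complex.re ∘ fun n : ℕ => ((n:ℂ)⁻¹ * ∑ i ∈ Finset.Icc m n,
            ((∑ z : Fin (i-m) → Fin d,
              p (m + (i-m) + m) (Fin.append (Fin.append x z) y) : ℝ) : ℂ))) n
          = (n:ℝ)⁻¹ * ∑ i ∈ Finset.Icc m n,
              ∑ z : Fin (i-m) → Fin d, p (m + (i-m) + m) (Fin.append (Fin.append x z) y) := by
        intro n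
        show ((n:ℂ)⁻¹ * ∑ i ∈ Finset.Icc m n,
            ((∑ z : Fin (i-m) → Fin d,
              p (m + (i-m) + m) (Fin.append (Fin.append x z) y) : ℝ) : ℂ)).re = _
        rw [show ((n:ℂ)⁻¹ * ∑ i ∈ Finset.Icc m n,
            ((∑ z : Fin (i-m) → Fin d,
              p (m + (i-m) + m) (Fin.append (Fin.append x z) y) : ℝ) : ℂ))
          = (((n:ℝ)⁻¹ * ∑ i ∈ Finset.Icc m n,
              ∑ z : Fin (i-m) → Fin d,
                p (m + (i-m) + m) (Fin.append (Fin.append x z) y) : ℝ) : ℂ) by push_cast; ring]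
        exact Complex.ofReal_re _
      have hre : ((p m x : ℂ) * (p m y : ℂ)).re = p m x * p m y := by
        rw [← Complex.ofReal_mul]; exact Complex.ofReal_re _
      rw [← hre]
      exact h2.congr key
    · intro he
      refine ⟨hQ, ?_⟩
      intro m hm a b
      simp only [clsState_delta]
      simp only [trace_diag_tens3]
      simp only [trace_diag_mul]
      have hfun : ∀ n : ℕ,
          (n:ℂ)⁻¹ * ∑ i ∈ Finset.Icc m n, ∑ x : Fin m → Fin d, ∑ y : Fin m → Fin d,
              ((∑ z : Fin (i-m) → Fin d,
                  p (m + (i-m) + m) (Fin.append (Fin.append x z) y) : ℝ) : ℂ)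
                * (a x x * b y y)
          = ∑ x : Fin m → Fin d, ∑ y : Fin m → Fin d,
              ((((n:ℝ)⁻¹ * ∑ i ∈ Finset.Icc m n,
                ∑ z : Fin (i-m) → Fin d,
                  p (m + (i-m) + m) (Fin.append (Fin.append x z) y)) : ℝ) : ℂ)
                * (a x x * b y y) := by
        intro n
        rw [Finset.sum_comm, Finset.mul_sum]
        refine Finset.sum_congr rfl fun x _ => ?_
        rw [Finset.sum_comm, Finset.mul_sum]
        refine Finset.sum_congr rfl fun y _ => ?_
        push_cast
        rw [Finset.mul_sum]
        conv_rhs => rw [mul_assoc, Finset.sum_mul, Finset.mul_sum]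
      have hL : (∑ x : Fin m → Fin d, (p m x : ℂ) * a x x)
            * (∑ y : Fin m → Fin d, (p m y : ℂ) * b y y)
          = ∑ x : Fin m → Fin d, ∑ y : Fin m → Fin d,
              (((p m x * p m y : ℝ)) : ℂ) * (a x x * b y y) := by
        rw [Finset.sum_mul_sum]
        refine Finset.sum_congr rfl fun x _ => Finset.sum_congr rfl fun y _ => ?_
        push_cast
        ring
      rw [hL]
      refine Tendsto.congr (fun n => (hfun n).symm) ?_
      refine tendsto_finset_sum _ fun x _ => tendsto_finset_sum _ fun y _ => ?_
      exact ((Complex.continuous_ofReal.tendsto _).comp (he m hm x y)).mul_const _
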